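/- The infinite words 121·Φ and 0102·Φ are square-free, where Φ = φ^ω(0) is the fixed point of φ(0)=01202120102120210, φ(1)=12010201210201021, φ(2)=20121012021012102. -/

import Mathlib

/-- A word has a square if some nonempty `u` with `u ++ u` an infix. -/
def HasSquare (w : List (Fin 3)) : Prop :=
  ∃ u : List (Fin 3), u ≠ [] ∧ (u ++ u) <:+: w

def SquareFree (w : List (Fin 3)) : Prop := ¬ HasSquare w

/-- `u` occurs as a factor of the infinite word `x`. -/
def InfFactor (u : List (Fin 3)) (x : ℕ → Fin 3) : Prop :=
  ∃ m : ℕ, ∀ i < u.length, u.getD i 0 = x (m + i)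

def InfSquareFree (x : ℕ → Fin 3) : Prop :=
  ¬ ∃ u : List (Fin 3), u ≠ [] ∧ InfFactor (u ++ u) x

/-- A square-free word is irreducibly square-free if deleting any interior
letter creates a square. -/
def IrrSF (w : List (Fin 3)) : Prop :=
  SquareFree w ∧
    ∀ (w1 w2 : List (Fin 3)) (a : Fin 3),
      w = w1 ++ [a] ++ w2 → w1 ≠ [] → w2 ≠ [] → HasSquare (w1 ++ w2)

/-- The uniform morphism φ of length 17. -/
def phi : Fin 3 → List (Fin 3) := ![[0,1,2,0,2,1,2,0,1,0,2,1,2,0,2,1,0], [1,2,0,1,0,2,0,1,2,1,0,2,0,1,0,2,1], [2,0,1,2,1,0,1,2,0,2,1,0,1,2,1,0,2]]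

def phiW (w : List (Fin 3)) : List (Fin 3) := w.flatMap phi

/-- The infinite fixed point `Φ = φ^ω(0)`. -/
def Phi (n : ℕ) : Fin 3 := ((phiW^[n+1]) [0]).getD n 0

/-- Prepend a finite word to an infinite word. -/
def prepend (w : List (Fin 3)) (x : ℕ → Fin 3) (n : ℕ) : Fin 3 :=
  if n < w.length then w.getD n 0 else x (n - w.length)

/- ============ auxiliary development ============ -/

set_option maxRecDepth 1000000
set_option synthInstance.maxSize 5000
set_option synthInstance.maxHeartbeats 2000000

/-- The letters of `phi 0`, encoded in base 3 for fast kernel arithmetic. -/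
def cc (r : ℕ) : Fin 3 := ⟨25281417 / 3^r % 3, Nat.mod_lt _ (by norm_num)⟩

lemma phi_getD : ∀ a : Fin 3, ∀ r < 17, (phi a).getD r 0 = a + cc r := by decide

lemma phi_length (a : Fin 3) : (phi a).length = 17 := by fin_cases a <;> rfl

lemma ccD : ∀ r < 16, cc r ≠ cc (r+1) := by decide
lemma cc16 : cc 16 = 0 := by decide
lemma cc0 : cc 0 = 0 := by decide

lemma phiW_cons (a : Fin 3) (w : List (Fin 3)) : phiW (a :: w) = phi a ++ phiW w := rfl

lemma phiW_length (w : List (Fin 3)) : (phiW w).length = 17 * w.length := by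
  induction w with
  | nil => rfl
  | cons a w ih => rw [phiW_cons, List.length_append, phi_length, ih, List.length_cons]; ring

lemma phiW_getD (w : List (Fin 3)) : ∀ q, ∀ r < 17, q < w.length →
    (phiW w).getD (17*q + r) 0 = (w.getD q 0) + cc r := by
  induction w with
  | nil => intro q r _ hq; simp at hq
  | cons a w ih =>
    intro q r hr hq
    rw [phiW_cons]
    match q with
    | 0 =>
      rw [List.getD_append _ _ _ _ (by rw [phi_length]; omega)]
      simpa using phi_getD a r hr
    | q+1 =>
      rw [List.getD_append_right _ _ _ _ (by rw [phi_length]; omega)]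
      have h1 : 17*(q+1) + r - (phi a).length = 17*q + r := by rw [phi_length]; omega
      rw [h1]
      simpa using ih q r hr (by simpa using hq)

lemma phiW_append (u v : List (Fin 3)) : phiW (u ++ v) = phiW u ++ phiW v := by
  simp [phiW]

lemma phiW_iter_prefix {u v : List (Fin 3)} (k : ℕ) (h : u <+: v) :
    phiW^[k] u <+: phiW^[k] v := by
  induction k generalizing u v with
  | zero => simpa using h
  | succ k ih =>
    rw [Function.iterate_succ_apply, Function.iterate_succ_apply]
    apply ih
    obtain ⟨t, rfl⟩ := h
    rw [phiW_append]
    exact ⟨phiW t, rfl⟩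

lemma iter_prefix_le {k k' : ℕ} (h : k ≤ k') : phiW^[k] [0] <+: phiW^[k'] [0] := by
  induction k' with
  | zero => simp_all
  | succ k' ih =>
    rcases Nat.lt_or_ge k (k'+1) with h' | h'
    · refine (ih (by omega)).trans ?_
      rw [Function.iterate_succ_apply]
      exact phiW_iter_prefix k' (by decide)
    · have : k = k' + 1 := by omega
      subst this; exact List.prefix_refl _

lemma iter_length (k : ℕ) : (phiW^[k] [0]).length = 17^k := by
  induction k with
  | zero => rfl
  | succ k ih => rw [Function.iterate_succ_apply', phiW_length, ih, pow_succ]; ring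

lemma getD_of_prefix {u v : List (Fin 3)} (h : u <+: v) {n : ℕ} (hn : n < u.length) :
    v.getD n 0 = u.getD n 0 := by
  obtain ⟨t, rfl⟩ := h
  exact List.getD_append _ _ _ _ hn

lemma Phi_eq {k n : ℕ} (h : n < 17^k) : Phi n = (phiW^[k] [0]).getD n 0 := by
  have h1 : n < 17^(n+1) :=
    lt_of_lt_of_le (Nat.lt_pow_self (n := n) (by norm_num)) (Nat.pow_le_pow_right (by norm_num) (by omega))
  rcases le_total (n+1) k with hk | hk
  · rw [Phi, getD_of_prefix (iter_prefix_le hk) (by rw [iter_length]; exact h1)]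
  · rw [Phi, getD_of_prefix (iter_prefix_le hk) (by rw [iter_length]; exact h)]

lemma Phi_block (q : ℕ) : ∀ r < 17, Phi (17*q + r) = Phi q + cc r := by
  intro r hr
  have hq : q < 17^(q+1) :=
    lt_of_lt_of_le (Nat.lt_pow_self (n := q) (by norm_num)) (Nat.pow_le_pow_right (by norm_num) (by omega))
  have h2 : 17*q + r < 17^(q+2) := by
    have h3 : 17*q + r < 17*(q+1) := by omega
    calc 17*q + r < 17*(q+1) := h3
    _ ≤ 17 * 17^(q+1) := by omega
    _ = 17^(q+2) := by ring
  rw [Phi_eq h2, show q+2 = (q+1)+1 from rfl, Function.iterate_succ_apply',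
    phiW_getD _ q r hr (by rw [iter_length]; exact hq), ← Phi_eq hq]

lemma Phi_zero : Phi 0 = 0 := by decide

lemma Phi_small : ∀ j < 289, Phi j = cc (j/17) + cc (j%17) := by
  intro j hj
  have h1 := Phi_block (j/17) (j%17) (by omega)
  rw [show 17*(j/17) + j%17 = j by omega] at h1
  have h3 := Phi_block 0 (j/17) (by omega)
  rw [show 17*0 + j/17 = j/17 by omega] at h3
  rw [h1, h3, Phi_zero, zero_add]

/-- Consecutive letters of `Φ` are distinct. -/
lemma P1 : ∀ m, Phi m ≠ Phi (m+1) := by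
  intro m
  induction m using Nat.strong_induction_on with
  | _ m ih =>
    rcases Nat.lt_or_ge (m % 17) 16 with hr | hr
    · have h1 := Phi_block (m/17) (m%17) (by omega)
      rw [show 17*(m/17) + m%17 = m by omega] at h1
      have h2 := Phi_block (m/17) (m%17+1) (by omega)
      rw [show 17*(m/17) + (m%17+1) = m+1 by omega] at h2
      rw [h1, h2]
      intro hEq
      exact ccD (m%17) hr (add_left_cancel hEq)
    · have h1 := Phi_block (m/17) 16 (by omega)
      rw [show 17*(m/17) + 16 = m by omega] at h1
      have h2 := Phi_block (m/17+1) 0 (by omega)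
      rw [show 17*(m/17+1) + 0 = m+1 by omega] at h2
      rw [h1, h2, cc16, cc0, add_zero, add_zero]
      exact ih (m/17) (by omega)

def FF (j : ℕ) : Fin 3 := cc (j/17) + cc (j%17)

set_option maxHeartbeats 4000000 in
lemma D1 : ∀ n < 34, 1 ≤ n → ∀ m < 51, ∃ i < n, FF (m+i) ≠ FF (m+n+i) := by decide

lemma D3 : ∀ e < 17, 1 ≤ e → ∀ A B : Fin 3, ∃ r < 17,
    ¬ (if r + e < 17 then cc r + A = cc (r+e) else cc r + B = cc (r+e-17)) := by decide

def sel (y0 y1 y2 y3 y4 : Fin 3) : ℕ → Fin 3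
  | 0 => y0 | 1 => y1 | 2 => y2 | 3 => y3 | _ => y4

def YY (y0 y1 y2 y3 y4 : Fin 3) (j : ℕ) : Fin 3 := sel y0 y1 y2 y3 y4 (j/17) + cc (j%17)

set_option maxHeartbeats 8000000 in
lemma D2 : ∀ y1 y2 y3 y4 : Fin 3,
    0 ≠ y1 → y1 ≠ y2 → y2 ≠ y3 → y3 ≠ y4 →
    ¬(0 = y2 ∧ y1 = y3) → ¬(y1 = y3 ∧ y2 = y4) →
    ∀ n < 34, 2 ≤ n → ∀ p < 17, ∃ i < n,
      YY 0 y1 y2 y3 y4 (p+i) ≠ YY 0 y1 y2 y3 y4 (p+n+i) := by decide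

lemma window (q : ℕ) : ∀ j < 85, Phi (17*q + j) =
    Phi q + YY 0 (Phi (q+1) - Phi q) (Phi (q+2) - Phi q) (Phi (q+3) - Phi q) (Phi (q+4) - Phi q) j := by
  intro j hj
  have h1 : 17*q + j = 17*(q + j/17) + j%17 := by omega
  rw [h1, Phi_block _ _ (by omega)]
  unfold YY
  have h2 : sel 0 (Phi (q+1) - Phi q) (Phi (q+2) - Phi q) (Phi (q+3) - Phi q) (Phi (q+4) - Phi q)
      (j/17) = Phi (q + j/17) - Phi q := by
    rcases (show j/17 = 0 ∨ j/17 = 1 ∨ j/17 = 2 ∨ j/17 = 3 ∨ j/17 = 4 by omega) with h|h|h|h|h <;>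
      rw [h] <;> simp [sel]
  rw [h2]; abel

/-- `Φ` contains no square of period `n` at position `m`. -/
lemma keyPhi : ∀ N n m, n + m ≤ N → 1 ≤ n → ¬ (∀ i < n, Phi (m+i) = Phi (m+n+i)) := by
  intro N
  induction N with
  | zero => intro n m hle h1 _; omega
  | succ N ih =>
    intro n m hNm hn h
    rcases Nat.lt_or_ge n 34 with hsmall | hbig
    · -- small periods
      rcases Nat.lt_or_ge m 51 with hm | hm
      · obtain ⟨i, hi, hne⟩ := D1 n hsmall hn m hm
        apply hne
        unfold FF
        rw [← Phi_small (m+i) (by omega), ← Phi_small (m+n+i) (by omega)]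
        exact h i hi
      · -- m ≥ 51 : compare against a 5-block window
        rcases Nat.lt_or_ge n 2 with h1 | h2
        · have hn1 : n = 1 := by omega
          subst hn1
          exact P1 m (by simpa using h 0 (by omega))
        set q := m / 17 with hq
        set p := m % 17 with hp
        have c1 : (0 : Fin 3) ≠ Phi (q+1) - Phi q := by
          intro hc
          exact P1 q (sub_eq_zero.mp hc.symm).symm
        have c2 : Phi (q+1) - Phi q ≠ Phi (q+2) - Phi q := by
          intro hc
          exact P1 (q+1) (by rw [show q+1+1 = q+2 by omega]; exact sub_left_inj.mp hc)
        have c3 : Phi (q+2) - Phi q ≠ Phi (q+3) - Phi q := by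
          intro hc
          exact P1 (q+2) (by rw [show q+2+1 = q+3 by omega]; exact sub_left_inj.mp hc)
        have c4 : Phi (q+3) - Phi q ≠ Phi (q+4) - Phi q := by
          intro hc
          exact P1 (q+3) (by rw [show q+3+1 = q+4 by omega]; exact sub_left_inj.mp hc)
        have t1 : ¬((0:Fin 3) = Phi (q+2) - Phi q ∧ Phi (q+1) - Phi q = Phi (q+3) - Phi q) := by
          rintro ⟨e1, e2⟩
          have f1 : Phi q = Phi (q+2) := (sub_eq_zero.mp e1.symm).symm
          have f2 : Phi (q+1) = Phi (q+3) := sub_left_inj.mp e2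
          refine ih 2 q (by omega) (by omega) ?_
          intro i hi
          interval_cases i
          · simpa using f1
          · rw [show q+2+1 = q+3 by omega]; exact f2
        have t2 : ¬(Phi (q+1) - Phi q = Phi (q+3) - Phi q ∧ Phi (q+2) - Phi q = Phi (q+4) - Phi q) := by
          rintro ⟨e1, e2⟩
          have f1 : Phi (q+1) = Phi (q+3) := sub_left_inj.mp e1
          have f2 : Phi (q+2) = Phi (q+4) := sub_left_inj.mp e2
          refine ih 2 (q+1) (by omega) (by omega) ?_
          intro i hi
          interval_cases i
          · rw [show q+1+0 = q+1 by omega, show q+1+2+0 = q+3 by omega]; exact f1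
          · rw [show q+1+1 = q+2 by omega, show q+1+2+1 = q+4 by omega]; exact f2
        obtain ⟨i, hi, hne⟩ := D2 (Phi (q+1) - Phi q) (Phi (q+2) - Phi q) (Phi (q+3) - Phi q)
          (Phi (q+4) - Phi q) c1 c2 c3 c4 t1 t2 n hsmall h2 p (by omega)
        apply hne
        have w1 := window q (p+i) (by omega)
        have w2 := window q (p+n+i) (by omega)
        rw [show 17*q + (p+i) = m+i by omega] at w1
        rw [show 17*q + (p+n+i) = m+n+i by omega] at w2
        have hh := h i hi
        rw [w1, w2] at hh
        exact add_left_cancel hh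
    · -- n ≥ 34 : synchronization and desubstitution
      set t := n / 17 with ht
      set e := n % 17 with he
      set a := (m+16)/17 with ha
      rcases Nat.eq_zero_or_pos e with he0 | he1
      · -- n = 17 t : desubstitute
        refine ih t a (by omega) (by omega) ?_
        intro i hi
        have h1 := h (17*(a+i) - m) (by omega)
        rw [show m + (17*(a+i) - m) = 17*(a+i) + 0 by omega] at h1
        rw [show m + n + (17*(a+i) - m) = 17*(a+(t+i)) + 0 by omega] at h1
        rw [Phi_block _ _ (by omega), Phi_block _ _ (by omega), cc0, add_zero, add_zero] at h1
        rw [show a + t + i = a + (t+i) by omega]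
        exact h1
      · -- n ≢ 0 mod 17 : impossible by synchronization
        have hblock : ∀ r < 17, Phi a + cc r =
            (if r + e < 17 then Phi (a+t) + cc (r+e) else Phi (a+t+1) + cc (r+e-17)) := by
          intro r hr
          have h1 := h (17*a + r - m) (by omega)
          rw [show m + (17*a + r - m) = 17*a + r by omega] at h1
          rw [Phi_block a r hr] at h1
          split_ifs with hc
          · rw [show m + n + (17*a + r - m) = 17*(a+t) + (r+e) by omega,
              Phi_block _ _ (by omega)] at h1
            exact h1
          · rw [show m + n + (17*a + r - m) = 17*(a+t+1) + (r+e-17) by omega,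
              Phi_block _ _ (by omega)] at h1
            exact h1
        obtain ⟨r, hr, hne⟩ := D3 e (by omega) he1 (Phi a - Phi (a+t)) (Phi a - Phi (a+t+1))
        apply hne
        have hb := hblock r hr
        split_ifs with hc
        · rw [if_pos hc] at hb; letI : CommRing (Fin 3) := Fin.instCommRing 3; linear_combination hb
        · rw [if_neg hc] at hb; letI : CommRing (Fin 3) := Fin.instCommRing 3; linear_combination hb

def X1 (j : ℕ) : Fin 3 := if j < 3 then ([1,2,1] : List (Fin 3)).getD j 0 else FF (j-3)
def X2 (j : ℕ) : Fin 3 := if j < 4 then ([0,1,0,2] : List (Fin 3)).getD j 0 else FF (j-4)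

set_option maxHeartbeats 2000000 in
lemma D4a : ∀ m < 3, ∀ n < 34, 1 ≤ n → ∃ i < n, X1 (m+i) ≠ X1 (m+n+i) := by decide
set_option maxHeartbeats 2000000 in
lemma D4b : ∀ m < 4, ∀ n < 34, 1 ≤ n → ∃ i < n, X2 (m+i) ≠ X2 (m+n+i) := by decide

lemma X1_eq : ∀ j < 292, prepend [1,2,1] Phi j = X1 j := by
  intro j hj
  rcases Nat.lt_or_ge j 3 with hc | hc
  · interval_cases j <;> rfl
  · unfold prepend X1 FF
    rw [if_neg (by simp; omega), if_neg (by omega)]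
    simpa using Phi_small (j-3) (by omega)

lemma X2_eq : ∀ j < 292, prepend [0,1,0,2] Phi j = X2 j := by
  intro j hj
  rcases Nat.lt_or_ge j 4 with hc | hc
  · interval_cases j <;> rfl
  · unfold prepend X2 FF
    rw [if_neg (by simp; omega), if_neg (by omega)]
    simpa using Phi_small (j-4) (by omega)

lemma main_aux (s : List (Fin 3)) (X : ℕ → Fin 3)
    (h1len : 1 ≤ s.length) (h4len : s.length ≤ 4)
    (hconv : ∀ j < 292, prepend s Phi j = X j)
    (hD4 : ∀ m < s.length, ∀ n < 34, 1 ≤ n → ∃ i < n, X (m+i) ≠ X (m+n+i)) :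
    InfSquareFree (prepend s Phi) := by
  rintro ⟨u, hu, m, hfac⟩
  set σ := s.length with hσ
  set n := u.length with hn
  have hn1 : 1 ≤ n := by rw [hn]; exact List.length_pos_iff.mpr hu
  have hsq : ∀ i < n, prepend s Phi (m+i) = prepend s Phi (m+n+i) := by
    intro i hi
    have h1 := hfac i (by rw [List.length_append]; omega)
    have h2 := hfac (n+i) (by rw [List.length_append]; omega)
    rw [List.getD_append _ _ _ _ (by omega : i < u.length)] at h1
    rw [List.getD_append_right _ _ _ _ (by omega : u.length ≤ n+i)] at h2
    rw [show n + i - u.length = i by omega] at h2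
    rw [show m + (n+i) = m+n+i by omega] at h2
    rw [← h1, ← h2]
  clear hfac
  rcases Nat.lt_or_ge m σ with hm | hm
  swap
  · -- the square would lie inside Φ
    refine keyPhi (n + (m - σ)) n (m - σ) le_rfl hn1 ?_
    intro i hi
    have hh := hsq i hi
    unfold prepend at hh
    rw [if_neg (by omega), if_neg (by omega)] at hh
    rw [show m + i - σ = (m - σ) + i by omega,
      show m + n + i - σ = (m - σ) + n + i by omega] at hh
    exact hh
  · rcases Nat.lt_or_ge n 34 with hsmall | hbig
    · -- short square near the start : finite check
      obtain ⟨i, hi, hne⟩ := hD4 m hm n hsmall hn1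
      apply hne
      rw [← hconv (m+i) (by omega), ← hconv (m+n+i) (by omega)]
      exact hsq i hi
    · -- long square near the start
      have hPhi : ∀ j, j < m + n - σ → Phi j = Phi (j + n) := by
        intro j hj
        have hh := hsq (σ + j - m) (by omega)
        unfold prepend at hh
        rw [if_neg (by omega), if_neg (by omega)] at hh
        rw [show m + (σ + j - m) - σ = j by omega] at hh
        rw [show m + n + (σ + j - m) - σ = j + n by omega] at hh
        exact hh
      set t := n / 17 with ht
      set e := n % 17 with he
      rcases Nat.eq_zero_or_pos e with he0 | he1
      · -- n = 17 t : desubstituted square at the origin of Φ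
        refine keyPhi t t 0 le_rfl (by omega) ?_
        intro i hi
        have h1 := hPhi (17*i) (by omega)
        rw [show 17*i + n = 17*(i+t) + 0 by omega] at h1
        rw [show (17*i : ℕ) = 17*i + 0 by omega] at h1
        rw [Phi_block _ _ (by omega), Phi_block _ _ (by omega), cc0, add_zero, add_zero] at h1
        rw [zero_add, zero_add, show t + i = i + t by omega]
        exact h1
      · -- n ≢ 0 mod 17 : impossible by synchronization
        have hblock : ∀ r < 17, Phi 0 + cc r =
            (if r + e < 17 then Phi t + cc (r+e) else Phi (t+1) + cc (r+e-17)) := by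
          intro r hr
          have b0 := Phi_block 0 r hr
          rw [show 17*0 + r = r by omega] at b0
          have h1 := hPhi r (by omega)
          rw [b0] at h1
          split_ifs with hc
          · rw [show r + n = 17*t + (r+e) by omega, Phi_block _ _ (by omega)] at h1
            exact h1
          · rw [show r + n = 17*(t+1) + (r+e-17) by omega, Phi_block _ _ (by omega)] at h1
            exact h1
        obtain ⟨r, hr, hne⟩ := D3 e (by omega) he1 (Phi 0 - Phi t) (Phi 0 - Phi (t+1))
        apply hne
        have hb := hblock r hr
        split_ifs with hc
        · rw [if_pos hc] at hb; letI : CommRing (Fin 3) := Fin.instCommRing 3; linear_combination hb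
        · rw [if_neg hc] at hb; letI : CommRing (Fin 3) := Fin.instCommRing 3; linear_combination hb

theorem prepend_121_0102_squareFree :
    InfSquareFree (prepend [1, 2, 1] Phi) ∧
    InfSquareFree (prepend [0, 1, 0, 2] Phi) := by
  constructor
  · exact main_aux [1,2,1] X1 (by norm_num) (by norm_num) X1_eq D4a
  · exact main_aux [0,1,0,2] X2 (by norm_num) (by norm_num) X2_eq D4b
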